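/- For μ > 0, define K_μ : ℝ \ {0} → ℝ by K_μ(x) = √(2/π) ∫_0^∞ τ e^{−|x|τ}/(μ²+τ²) dτ. Then K_μ ∈ L¹(ℝ) ∩ L²(ℝ) and its Fourier transform satisfies K̂_μ(ξ) = 1/(|ξ|+μ) for all ξ ∈ ℝ. -/

import Mathlib

open MeasureTheory Set

/-- The kernel `K_μ(x) = √(2/π) ∫_0^∞ τ e^{−|x|τ}/(μ²+τ²) dτ`. -/
noncomputable def Kmu (μ x : ℝ) : ℝ :=
  Real.sqrt (2 / Real.pi) * ∫ τ in Ioi (0:ℝ), τ * Real.exp (-|x| * τ) / (μ ^ 2 + τ ^ 2)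

/-- The Fourier transform with the convention
`ĝ(ξ) = (1/√(2π)) ∫_ℝ g(x) e^{−iξx} dx`. -/
noncomputable def fourierTr (g : ℝ → ℂ) (ξ : ℝ) : ℂ :=
  (Real.sqrt (2 * Real.pi) : ℂ)⁻¹ * ∫ x : ℝ, g x * Complex.exp (-(ξ * x) * Complex.I)

open Real Filter Topology

-- even extension integrability
lemma evenIntegrableOn {E : Type*} [NormedAddCommGroup E] {f : ℝ → E}
    (hsymm : ∀ x, f (-x) = f x) (hf : IntegrableOn f (Ioi 0)) : IntegrableOn f (Iic 0) := by
  have m : MeasurableEmbedding (Neg.neg : ℝ → ℝ) := (Homeomorph.neg ℝ).measurableEmbedding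
  have : IntegrableOn f (Iic 0) (Measure.map Neg.neg volume) := by
    rw [m.integrableOn_map_iff]
    simp_rw [Function.comp_def, hsymm, neg_preimage, neg_Iic, neg_zero]
    exact (integrableOn_Ici_iff_integrableOn_Ioi).mpr hf
  rwa [Measure.map_neg_eq_self (volume : Measure ℝ)] at this

lemma integrable_of_even {E : Type*} [NormedAddCommGroup E] {f : ℝ → E}
    (hsymm : ∀ x, f (-x) = f x) (hf : IntegrableOn f (Ioi 0)) : Integrable f := by
  rw [← integrableOn_univ, ← Iic_union_Ioi (a := (0:ℝ))]
  exact (evenIntegrableOn hsymm hf).union hf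

lemma arctan_deriv (a : ℝ) (ha : 0 < a) :
    ∀ x ∈ Ici (0:ℝ), HasDerivAt (fun τ : ℝ => a⁻¹ * arctan (τ / a)) ((a^2+x^2)⁻¹) x := by
  intro x _
  have h1 : HasDerivAt (fun τ : ℝ => arctan (τ / a)) ((1 / (1 + (x/a)^2)) * (1/a)) x := by
    simpa [Function.comp_def] using (Real.hasDerivAt_arctan (x/a)).comp x ((hasDerivAt_id x).div_const a)
  refine (h1.const_mul a⁻¹).congr_deriv ?_
  field_simp

lemma arctan_tendsto (a : ℝ) (ha : 0 < a) :
    Tendsto (fun τ : ℝ => a⁻¹ * arctan (τ / a)) atTop (𝓝 (a⁻¹ * (π/2))) := by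
  have h2 : Tendsto (fun τ : ℝ => τ / a) atTop atTop := tendsto_id.atTop_div_const ha
  exact ((tendsto_nhds_of_tendsto_nhdsWithin Real.tendsto_arctan_atTop).comp h2).const_mul a⁻¹

lemma integrableOn_inv_sq_add (a : ℝ) (ha : 0 < a) :
    IntegrableOn (fun τ : ℝ => (a^2+τ^2)⁻¹) (Ioi 0) :=
  integrableOn_Ioi_deriv_of_nonneg' (arctan_deriv a ha)
    (fun x _ => by positivity) (arctan_tendsto a ha)

lemma integral_inv_sq_add (a : ℝ) (ha : 0 < a) :
    ∫ τ in Ioi (0:ℝ), (a^2+τ^2)⁻¹ = π/(2*a) := by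
  rw [integral_Ioi_of_hasDerivAt_of_tendsto' (arctan_deriv a ha)
    (integrableOn_inv_sq_add a ha) (arctan_tendsto a ha)]
  simp [arctan_zero]
  ring

lemma integral_sq_mul_inv_sq_add (b : ℝ) (hb : 0 ≤ b) :
    IntegrableOn (fun τ : ℝ => b^2 * (b^2+τ^2)⁻¹) (Ioi 0) ∧
      ∫ τ in Ioi (0:ℝ), b^2 * (b^2+τ^2)⁻¹ = b * (π/2) := by
  rcases hb.eq_or_lt with rfl | hb
  · simp
  · refine ⟨(integrableOn_inv_sq_add b hb).const_mul _, ?_⟩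
    rw [integral_const_mul, integral_inv_sq_add b hb]
    field_simp

-- tendsto of τ/(a²+τ²) to 0
lemma frac_tendsto (a : ℝ) (ha : 0 < a) :
    Tendsto (fun τ : ℝ => τ / (a^2+τ^2)) atTop (𝓝 0) := by
  apply squeeze_zero' (g := fun τ : ℝ => τ⁻¹)
  · filter_upwards [eventually_gt_atTop (0:ℝ)] with τ hτ
    positivity
  · filter_upwards [eventually_gt_atTop (0:ℝ)] with τ hτ
    rw [div_le_iff₀ (by positivity), inv_mul_eq_div, le_div_iff₀ hτ]
    nlinarith [sq_nonneg a]
  · exact tendsto_inv_atTop_zero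

lemma sq_sq_deriv (a : ℝ) (ha : 0 < a) :
    ∀ x ∈ Ici (0:ℝ), HasDerivAt
      (fun τ : ℝ => (a⁻¹ * arctan (τ / a) - τ / (a^2+τ^2))/2)
      (x^2 / ((a^2+x^2)*(a^2+x^2))) x := by
  intro x hx
  have h0 : a^2 + x^2 ≠ 0 := by positivity
  have h1 := arctan_deriv a ha x hx
  have h2 := (hasDerivAt_id x).div (((hasDerivAt_id x).pow 2).const_add (a^2)) h0
  refine ((h1.sub h2).div_const 2).congr_deriv ?_
  simp only [id, Pi.pow_apply]
  field_simp
  ring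

lemma Jlemma (a b : ℝ) (ha : 0 < a) (hb : 0 ≤ b) :
    IntegrableOn (fun τ : ℝ => τ^2 / ((a^2+τ^2)*(b^2+τ^2))) (Ioi 0) ∧
      ∫ τ in Ioi (0:ℝ), τ^2 / ((a^2+τ^2)*(b^2+τ^2)) = π/(2*(a+b)) := by
  have hmeas : Measurable (fun τ : ℝ => τ^2 / ((a^2+τ^2)*(b^2+τ^2))) := by fun_prop
  have hint : IntegrableOn (fun τ : ℝ => τ^2 / ((a^2+τ^2)*(b^2+τ^2))) (Ioi 0) := by
    apply Integrable.mono' (integrableOn_inv_sq_add a ha)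
      hmeas.aestronglyMeasurable.restrict
    filter_upwards [ae_restrict_mem measurableSet_Ioi] with τ hτ
    have hτ' : (0:ℝ) < τ := hτ
    have h1 : 0 < a^2+τ^2 := by positivity
    have h2 : 0 < b^2+τ^2 := by nlinarith
    rw [Real.norm_eq_abs, abs_of_nonneg (by positivity)]
    rw [div_le_iff₀ (mul_pos h1 h2)]
    have : τ^2 ≤ b^2 + τ^2 := by nlinarith
    calc τ^2 ≤ (a^2+τ^2)⁻¹ * ((a^2+τ^2) * τ^2) := by
              rw [inv_mul_cancel_left₀ h1.ne']
      _ ≤ (a^2+τ^2)⁻¹ * ((a^2+τ^2)*(b^2+τ^2)) := by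
              apply mul_le_mul_of_nonneg_left _ (by positivity)
              apply mul_le_mul_of_nonneg_left this h1.le
  refine ⟨hint, ?_⟩
  rcases eq_or_ne b a with rfl | hba
  · rw [integral_Ioi_of_hasDerivAt_of_tendsto' (sq_sq_deriv b (by linarith))
      (by exact hint) (((arctan_tendsto b (by linarith)).sub
        (frac_tendsto b (by linarith))).div_const 2)]
    rw [zero_div, arctan_zero]
    have hb0 : b ≠ 0 := ne_of_gt (by linarith)
    field_simp
    ring
  · have hb' : b^2 ≠ a^2 := by
      intro h
      have h2 : (b - a) * (b + a) = 0 := by nlinarith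
      rcases mul_eq_zero.mp h2 with h3 | h3
      · exact hba (by linarith)
      · nlinarith
    have key : ∀ τ ∈ Ioi (0:ℝ), τ^2 / ((a^2+τ^2)*(b^2+τ^2)) =
        (a^2-b^2)⁻¹ * (a^2*(a^2+τ^2)⁻¹ - b^2*(b^2+τ^2)⁻¹) := by
      intro τ hτ
      have hτ' : (0:ℝ) < τ := hτ
      have h1 : a^2+τ^2 ≠ 0 := ne_of_gt (by positivity)
      have h2 : b^2+τ^2 ≠ 0 := ne_of_gt (by nlinarith)
      have h3 : a^2-b^2 ≠ 0 := sub_ne_zero.mpr (Ne.symm hb')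
      field_simp
      ring
    rw [setIntegral_congr_fun measurableSet_Ioi key]
    rw [integral_const_mul]
    rw [integral_sub ((integral_sq_mul_inv_sq_add a ha.le).1) ((integral_sq_mul_inv_sq_add b hb).1),
      (integral_sq_mul_inv_sq_add a ha.le).2, (integral_sq_mul_inv_sq_add b hb).2]
    have h3 : a^2-b^2 ≠ 0 := sub_ne_zero.mpr (Ne.symm hb')
    have h4 : a + b ≠ 0 := ne_of_gt (by linarith)
    field_simp
    ring

lemma integrable_exp_neg_abs (t : ℝ) (ht : 0 < t) :
    Integrable (fun x : ℝ => Real.exp (-(t * |x|))) := by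
  apply integrable_of_even (fun x => by rw [abs_neg])
  apply ((exp_neg_integrableOn_Ioi 0 ht)).congr_fun _ measurableSet_Ioi
  intro x hx
  simp only [abs_of_pos (show (0:ℝ) < x from hx), neg_mul]

lemma integral_exp_neg_mul_Ioi (t : ℝ) (ht : 0 < t) :
    ∫ x in Ioi (0:ℝ), Real.exp (-(t * x)) = 1/t := by
  have : ∀ x ∈ Ioi (0:ℝ), Real.exp (-(t*x)) = Real.exp (-(x*t)) := by
    intro x _; rw [mul_comm]
  rw [setIntegral_congr_fun measurableSet_Ioi this]
  rw [show (fun x : ℝ => Real.exp (-(x*t))) = (fun x : ℝ => Real.exp (-(x*t))) from rfl]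
  have := integral_comp_mul_right_Ioi (fun y => Real.exp (-y)) 0 ht
  simp only [zero_mul] at this
  rw [show (∫ x in Ioi (0:ℝ), Real.exp (-(x*t))) = ∫ x in Ioi (0:ℝ), (fun y => Real.exp (-y)) (x*t) from rfl, this]
  rw [integral_exp_neg_Ioi]
  simp [smul_eq_mul]

lemma integral_exp_neg_abs (t : ℝ) (ht : 0 < t) :
    ∫ x : ℝ, Real.exp (-(t * |x|)) = 2/t := by
  rw [integral_comp_abs (f := fun x => Real.exp (-(t * x)))]
  rw [integral_exp_neg_mul_Ioi t ht]
  ring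

lemma integrableOn_cexp_Ioi (c : ℂ) (hc : 0 < c.re) :
    IntegrableOn (fun x : ℝ => Complex.exp (-(c * x))) (Ioi 0) := by
  apply Integrable.mono' (exp_neg_integrableOn_Ioi 0 hc)
  · exact (Complex.continuous_exp.comp (by continuity)).aestronglyMeasurable.restrict
  · filter_upwards with x
    rw [Complex.norm_exp]
    simp [Complex.neg_re, Complex.mul_re]

lemma integral_cexp_Ioi (c : ℂ) (hc : 0 < c.re) :
    ∫ x in Ioi (0:ℝ), Complex.exp (-(c * x)) = 1/c := by
  have hc0 : c ≠ 0 := fun h => by simp [h] at hc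
  refine tendsto_nhds_unique
    (intervalIntegral_tendsto_integral_Ioi 0 (integrableOn_cexp_Ioi c hc) tendsto_id) ?_
  have key : ∀ b : ℝ, (∫ x in (0:ℝ)..b, Complex.exp (-(c * x)))
      = (1 - Complex.exp (-(c*b))) / c := by
    intro b
    have := integral_exp_mul_complex (a := 0) (b := b) (c := -c) (neg_ne_zero.mpr hc0)
    simp only [neg_mul] at this ⊢
    rw [this]
    rw [div_eq_div_iff (neg_ne_zero.mpr hc0) hc0]
    simp [mul_comm]
    ring
  simp_rw [key]
  have h1 : Tendsto (fun b : ℝ => Complex.exp (-(c*b))) atTop (𝓝 0) := by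
    rw [tendsto_zero_iff_norm_tendsto_zero]
    have : ∀ b : ℝ, ‖Complex.exp (-(c*b))‖ = Real.exp (-(c.re * b)) := by
      intro b
      rw [Complex.norm_exp]
      simp [Complex.neg_re, Complex.mul_re]
    simp_rw [this]
    have h2 : Tendsto (fun b : ℝ => -(c.re * b)) atTop atBot := by
      exact tendsto_neg_atBot_iff.mpr (tendsto_id.const_mul_atTop hc)
    exact Real.tendsto_exp_atBot.comp h2
  have := ((tendsto_const_nhds (x := (1:ℂ))).sub h1).div_const c
  simpa using this

lemma integrable_cexp_kernel (t ξ : ℝ) (ht : 0 < t) :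
    Integrable (fun x : ℝ =>
      (Real.exp (-(t * |x|)) : ℂ) * Complex.exp (-(ξ * x) * Complex.I)) := by
  apply (integrable_exp_neg_abs t ht).mono'
  · apply Continuous.aestronglyMeasurable
    apply Continuous.mul
    · exact Complex.continuous_ofReal.comp (Real.continuous_exp.comp (by continuity))
    · exact Complex.continuous_exp.comp (by continuity)
  · filter_upwards with x
    rw [norm_mul]
    have h1 : ‖((Real.exp (-(t * |x|)) : ℝ) : ℂ)‖ = Real.exp (-(t * |x|)) := by
      rw [Complex.norm_real, Real.norm_eq_abs, abs_of_pos (Real.exp_pos _)]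
    have h2 : ‖Complex.exp (-(↑ξ * ↑x) * Complex.I)‖ = 1 := by
      rw [Complex.norm_exp]
      simp
    rw [h1, h2, mul_one]

lemma fourier_exp_abs (t ξ : ℝ) (ht : 0 < t) :
    ∫ x : ℝ, (Real.exp (-(t * |x|)) : ℂ) * Complex.exp (-(ξ * x) * Complex.I)
      = ((2*t/(t^2+ξ^2) : ℝ) : ℂ) := by
  have hg := integrable_cexp_kernel t ξ ht
  rw [← intervalIntegral.integral_Iic_add_Ioi (b := (0:ℝ)) hg.integrableOn hg.integrableOn]
  have hIoi : ∫ x in Ioi (0:ℝ),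
      (Real.exp (-(t * |x|)) : ℂ) * Complex.exp (-(ξ * x) * Complex.I)
      = 1 / ((t:ℂ) + ξ * Complex.I) := by
    rw [← integral_cexp_Ioi ((t:ℂ) + ξ * Complex.I) (by simp [ht])]
    apply setIntegral_congr_fun measurableSet_Ioi
    intro x hx
    have hx' : (0:ℝ) < x := hx
    show (Real.exp (-(t * |x|)) : ℂ) * Complex.exp (-(↑ξ * ↑x) * Complex.I)
      = Complex.exp (-((↑t + ↑ξ * Complex.I) * ↑x))
    rw [abs_of_pos hx', Complex.ofReal_exp, ← Complex.exp_add]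
    congr 1
    push_cast
    ring
  have hIic : ∫ x in Iic (0:ℝ),
      (Real.exp (-(t * |x|)) : ℂ) * Complex.exp (-(ξ * x) * Complex.I)
      = 1 / ((t:ℂ) - ξ * Complex.I) := by
    have e1 : ∫ x in Iic (0:ℝ),
        (Real.exp (-(t * |x|)) : ℂ) * Complex.exp (-(ξ * x) * Complex.I)
        = ∫ x in Iic (0:ℝ),
          (fun y : ℝ => (Real.exp (-(t * |y|)) : ℂ) * Complex.exp ((ξ * y) * Complex.I)) (-x) := by
      apply setIntegral_congr_fun measurableSet_Iic
      intro x _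
      simp only [abs_neg]
      push_cast
      ring_nf
    have e2 := integral_comp_neg_Iic (0:ℝ)
      (fun y : ℝ => (Real.exp (-(t * |y|)) : ℂ) * Complex.exp ((ξ * y) * Complex.I))
    simp only [neg_zero] at e2
    rw [e1, e2]
    rw [← integral_cexp_Ioi ((t:ℂ) - ξ * Complex.I) (by simp [ht])]
    apply setIntegral_congr_fun measurableSet_Ioi
    intro x hx
    have hx' : (0:ℝ) < x := hx
    show (Real.exp (-(t * |x|)) : ℂ) * Complex.exp ((↑ξ * ↑x) * Complex.I)
      = Complex.exp (-((↑t - ↑ξ * Complex.I) * ↑x))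
    rw [abs_of_pos hx', Complex.ofReal_exp, ← Complex.exp_add]
    congr 1
    push_cast
    ring
  rw [hIoi, hIic]
  have hp : ((t:ℂ) + ξ * Complex.I) ≠ 0 := by
    intro h
    have := congrArg Complex.re h
    simp at this
    linarith
  have hm : ((t:ℂ) - ξ * Complex.I) ≠ 0 := by
    intro h
    have := congrArg Complex.re h
    simp at this
    linarith
  have hd : ((t^2+ξ^2 : ℝ) : ℂ) ≠ 0 := by
    simp only [ne_eq, Complex.ofReal_eq_zero]
    positivity
  rw [div_add_div _ _ hm hp, Complex.ofReal_div]
  rw [div_eq_div_iff (by exact mul_ne_zero hm hp) hd]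
  push_cast
  ring_nf
  rw [Complex.I_sq]
  ring

lemma exp_neg_le_inv {s : ℝ} (hs : 0 < s) : Real.exp (-s) ≤ s⁻¹ := by
  rw [Real.exp_neg]
  apply inv_anti₀ hs
  linarith [Real.add_one_le_exp s]

lemma exp_neg_le_rpow {s : ℝ} (hs : 0 < s) : Real.exp (-s) ≤ s ^ (-(1/4) : ℝ) := by
  rw [Real.exp_neg, Real.rpow_neg hs.le]
  apply inv_anti₀ (Real.rpow_pos_of_pos hs _)
  rcases le_or_gt s 1 with h1 | h1
  · calc s ^ ((1/4):ℝ) ≤ 1 := Real.rpow_le_one hs.le h1 (by norm_num)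
      _ ≤ Real.exp s := by linarith [Real.add_one_le_exp s]
  · calc s ^ ((1/4):ℝ) ≤ s ^ (1:ℝ) := Real.rpow_le_rpow_of_exponent_le h1.le (by norm_num)
      _ = s := Real.rpow_one s
      _ ≤ Real.exp s := by linarith [Real.add_one_le_exp s]

lemma measurable_rpow_div (μ : ℝ) : Measurable (fun τ : ℝ => τ ^ ((3:ℝ)/4) / (μ^2+τ^2)) :=
  ((Real.continuous_rpow_const (by norm_num : (0:ℝ) ≤ 3/4)).measurable).div (by fun_prop)

lemma integrableOn_rpow_div (μ : ℝ) (hμ : 0 < μ) :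
    IntegrableOn (fun τ : ℝ => τ ^ ((3:ℝ)/4) / (μ^2+τ^2)) (Ioi 0) := by
  rw [show Ioi (0:ℝ) = Ioc 0 1 ∪ Ioi 1 from (Ioc_union_Ioi_eq_Ioi zero_le_one).symm]
  apply IntegrableOn.union
  · have hconst : IntegrableOn (fun _ : ℝ => (μ^2)⁻¹) (Ioc (0:ℝ) 1) volume :=
      integrableOn_const (measure_Ioc_lt_top).ne
    apply Integrable.mono' hconst
    · exact (measurable_rpow_div μ).aestronglyMeasurable.restrict
    · filter_upwards [ae_restrict_mem measurableSet_Ioc] with τ hτ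
      have h1 : 0 < τ := hτ.1
      have h2 : τ ≤ 1 := hτ.2
      have hd : (0:ℝ) < μ^2+τ^2 := by positivity
      rw [Real.norm_eq_abs, abs_of_nonneg (by positivity)]
      have hn : τ ^ ((3:ℝ)/4) ≤ 1 := Real.rpow_le_one h1.le h2 (by norm_num)
      calc τ ^ ((3:ℝ)/4) / (μ^2+τ^2) ≤ 1 / μ^2 :=
            div_le_div₀ zero_le_one hn (by positivity) (by nlinarith)
        _ = (μ^2)⁻¹ := one_div _
  · apply Integrable.mono' (integrableOn_Ioi_rpow_of_lt (show (-(5:ℝ)/4) < -1 by norm_num) zero_lt_one)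
    · exact (measurable_rpow_div μ).aestronglyMeasurable.restrict
    · filter_upwards [ae_restrict_mem measurableSet_Ioi] with τ hτ
      have h1 : (1:ℝ) < τ := hτ
      have h0 : (0:ℝ) < τ := by linarith
      have hd : (0:ℝ) < μ^2+τ^2 := by positivity
      rw [Real.norm_eq_abs, abs_of_nonneg (by positivity)]
      calc τ ^ ((3:ℝ)/4) / (μ^2+τ^2) ≤ τ ^ ((3:ℝ)/4) / τ^2 := by
            apply div_le_div_of_nonneg_left (by positivity) (by positivity) (by nlinarith)
        _ = τ ^ (-(5:ℝ)/4) := by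
            rw [← Real.rpow_natCast τ 2, ← Real.rpow_sub h0]
            norm_num

lemma H_prod_integrable (μ : ℝ) (hμ : 0 < μ) :
    Integrable (fun p : ℝ × ℝ => p.2 * Real.exp (-|p.1| * p.2) / (μ ^ 2 + p.2 ^ 2))
      (volume.prod (volume.restrict (Ioi 0))) := by
  have hmeas : AEStronglyMeasurable (fun q : ℝ × ℝ => q.1 * Real.exp (-|q.2| * q.1) / (μ ^ 2 + q.1 ^ 2))
      ((volume.restrict (Ioi 0)).prod volume) := by
    apply Measurable.aestronglyMeasurable
    fun_prop
  have h1 : ∀ᵐ τ ∂(volume.restrict (Ioi (0:ℝ))),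
      Integrable (fun x : ℝ => τ * Real.exp (-|x| * τ) / (μ ^ 2 + τ ^ 2)) volume := by
    filter_upwards [ae_restrict_mem measurableSet_Ioi] with τ hτ
    have hτ' : (0:ℝ) < τ := hτ
    have he : (fun x : ℝ => τ * Real.exp (-|x| * τ) / (μ ^ 2 + τ ^ 2))
        = fun x => (τ/(μ^2+τ^2)) * Real.exp (-(τ * |x|)) := by
      funext x
      rw [mul_comm τ (|x|)]
      ring
    rw [he]
    exact (integrable_exp_neg_abs τ hτ').const_mul _
  have h2 : Integrable (fun τ : ℝ => ∫ x : ℝ, ‖τ * Real.exp (-|x| * τ) / (μ ^ 2 + τ ^ 2)‖)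
      (volume.restrict (Ioi 0)) := by
    apply Integrable.congr ((integrableOn_inv_sq_add μ hμ).const_mul 2)
    filter_upwards [ae_restrict_mem measurableSet_Ioi] with τ hτ
    have hτ' : (0:ℝ) < τ := hτ
    have hd : (0:ℝ) < μ^2 + τ^2 := by positivity
    have he : (fun x : ℝ => ‖τ * Real.exp (-|x| * τ) / (μ ^ 2 + τ ^ 2)‖)
        = fun x => (τ/(μ^2+τ^2)) * Real.exp (-(τ * |x|)) := by
      funext x
      rw [Real.norm_eq_abs, abs_of_nonneg (by positivity), mul_comm τ (|x|)]
      ring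
    rw [he, integral_const_mul, integral_exp_neg_abs τ hτ']
    field_simp
  have key := (integrable_prod_iff hmeas).mpr ⟨h1, h2⟩
  exact key.swap

lemma Kmu_integrable (μ : ℝ) (hμ : 0 < μ) : Integrable (Kmu μ) volume := by
  have : Kmu μ = fun x => Real.sqrt (2 / Real.pi) *
      ∫ τ in Ioi (0:ℝ), τ * Real.exp (-|x| * τ) / (μ ^ 2 + τ ^ 2) := rfl
  rw [this]
  exact ((H_prod_integrable μ hμ).integral_prod_left).const_mul _

lemma Kslice_integrableOn (μ : ℝ) (hμ : 0 < μ) (x : ℝ) (hx : x ≠ 0) :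
    IntegrableOn (fun τ : ℝ => τ * Real.exp (-|x| * τ) / (μ^2+τ^2)) (Ioi 0) := by
  apply Integrable.mono' ((exp_neg_integrableOn_Ioi 0 (abs_pos.mpr hx)).const_mul (1/(2*μ)))
  · apply Measurable.aestronglyMeasurable (by fun_prop) |>.restrict
  · filter_upwards [ae_restrict_mem measurableSet_Ioi] with τ hτ
    have hτ' : (0:ℝ) < τ := hτ
    have hd : (0:ℝ) < μ^2+τ^2 := by positivity
    rw [Real.norm_eq_abs, abs_of_nonneg (by positivity)]
    have h : τ * Real.exp (-|x| * τ) / (μ^2+τ^2) = (τ/(μ^2+τ^2)) * Real.exp (-|x| * τ) := by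
      ring
    rw [h]
    apply mul_le_mul_of_nonneg_right _ (Real.exp_nonneg _)
    rw [div_le_iff₀ hd, one_div, inv_mul_eq_div, le_div_iff₀ (by positivity)]
    nlinarith [sq_nonneg (μ - τ)]

lemma Kmu_nonneg (μ : ℝ) (x : ℝ) : 0 ≤ Kmu μ x := by
  apply mul_nonneg (Real.sqrt_nonneg _)
  apply setIntegral_nonneg measurableSet_Ioi
  intro τ hτ
  have hτ' : (0:ℝ) < τ := hτ
  positivity

lemma Kmu_le_bound1 (μ : ℝ) (hμ : 0 < μ) (x : ℝ) (hx : x ≠ 0) :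
    Kmu μ x ≤ Real.sqrt (2/π) *
      ((∫ τ in Ioi (0:ℝ), τ ^ ((3:ℝ)/4) / (μ^2+τ^2)) * |x| ^ (-(1/4):ℝ)) := by
  have hax : 0 < |x| := abs_pos.mpr hx
  apply mul_le_mul_of_nonneg_left _ (Real.sqrt_nonneg _)
  have step : ∫ τ in Ioi (0:ℝ), τ * Real.exp (-|x| * τ) / (μ ^ 2 + τ ^ 2)
      ≤ ∫ τ in Ioi (0:ℝ), (τ ^ ((3:ℝ)/4) / (μ^2+τ^2)) * |x| ^ (-(1/4):ℝ) := by
    apply setIntegral_mono_on (Kslice_integrableOn μ hμ x hx)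
      ((integrableOn_rpow_div μ hμ).mul_const _) measurableSet_Ioi
    intro τ hτ
    have hτ' : (0:ℝ) < τ := hτ
    have hd : (0:ℝ) < μ^2+τ^2 := by positivity
    have hs : 0 < |x| * τ := mul_pos hax hτ'
    have he : Real.exp (-|x| * τ) ≤ |x| ^ (-(1/4):ℝ) * τ ^ (-(1/4):ℝ) := by
      rw [neg_mul]
      exact (exp_neg_le_rpow hs).trans_eq (Real.mul_rpow hax.le hτ'.le)
    have hτpow : τ * τ ^ (-(1/4):ℝ) = τ ^ ((3:ℝ)/4) := by
      nth_rewrite 1 [← Real.rpow_one τ]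
      rw [← Real.rpow_add hτ']
      norm_num
    calc τ * Real.exp (-|x| * τ) / (μ ^ 2 + τ ^ 2)
        ≤ τ * (|x| ^ (-(1/4):ℝ) * τ ^ (-(1/4):ℝ)) / (μ ^ 2 + τ ^ 2) := by
          gcongr
      _ = (τ ^ ((3:ℝ)/4) / (μ^2+τ^2)) * |x| ^ (-(1/4):ℝ) := by
          rw [show τ * (|x| ^ (-(1/4):ℝ) * τ ^ (-(1/4):ℝ))
            = (τ * τ ^ (-(1/4):ℝ)) * |x| ^ (-(1/4):ℝ) by ring, hτpow]
          ring
  calc (∫ τ in Ioi (0:ℝ), τ * Real.exp (-|x| * τ) / (μ ^ 2 + τ ^ 2)) ≤ _ := step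
    _ = (∫ τ in Ioi (0:ℝ), τ ^ ((3:ℝ)/4) / (μ^2+τ^2)) * |x| ^ (-(1/4):ℝ) := by
        rw [integral_mul_const]

lemma Kmu_le_bound2 (μ : ℝ) (hμ : 0 < μ) (x : ℝ) (hx : x ≠ 0) :
    Kmu μ x ≤ Real.sqrt (2/π) * ((π/(2*μ)) * |x|⁻¹) := by
  have hax : 0 < |x| := abs_pos.mpr hx
  apply mul_le_mul_of_nonneg_left _ (Real.sqrt_nonneg _)
  have step : ∫ τ in Ioi (0:ℝ), τ * Real.exp (-|x| * τ) / (μ ^ 2 + τ ^ 2)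
      ≤ ∫ τ in Ioi (0:ℝ), (μ^2+τ^2)⁻¹ * |x|⁻¹ := by
    apply setIntegral_mono_on (Kslice_integrableOn μ hμ x hx)
      ((integrableOn_inv_sq_add μ hμ).mul_const _) measurableSet_Ioi
    intro τ hτ
    have hτ' : (0:ℝ) < τ := hτ
    have hd : (0:ℝ) < μ^2+τ^2 := by positivity
    have hs : 0 < |x| * τ := mul_pos hax hτ'
    have he : Real.exp (-|x| * τ) ≤ (|x| * τ)⁻¹ := by
      rw [neg_mul]
      exact exp_neg_le_inv hs
    calc τ * Real.exp (-|x| * τ) / (μ ^ 2 + τ ^ 2)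
        ≤ τ * (|x| * τ)⁻¹ / (μ ^ 2 + τ ^ 2) := by
          gcongr
      _ = (μ^2+τ^2)⁻¹ * |x|⁻¹ := by
          rw [mul_inv, show τ * (|x|⁻¹ * τ⁻¹) = (τ * τ⁻¹) * |x|⁻¹ by ring,
            mul_inv_cancel₀ hτ'.ne']
          ring
  calc (∫ τ in Ioi (0:ℝ), τ * Real.exp (-|x| * τ) / (μ ^ 2 + τ ^ 2)) ≤ _ := step
    _ = (π/(2*μ)) * |x|⁻¹ := by
        rw [integral_mul_const, integral_inv_sq_add μ hμ]

lemma Kmu_memL2 (μ : ℝ) (hμ : 0 < μ) (hKint : Integrable (Kmu μ) volume) :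
    MemLp (Kmu μ) 2 volume := by
  rw [memLp_two_iff_integrable_sq hKint.aestronglyMeasurable]
  have hsm : AEStronglyMeasurable (fun x => Kmu μ x ^ 2) volume := by
    have h := hKint.aestronglyMeasurable
    exact h.pow 2
  set C₁ : ℝ := Real.sqrt (2/π) * (∫ τ in Ioi (0:ℝ), τ ^ ((3:ℝ)/4) / (μ^2+τ^2)) with hC₁
  set C₂ : ℝ := Real.sqrt (2/π) * (π/(2*μ)) with hC₂
  apply integrable_of_even (fun x => by unfold Kmu; rw [abs_neg])
  rw [show Ioi (0:ℝ) = Ioc 0 1 ∪ Ioi 1 from (Ioc_union_Ioi_eq_Ioi zero_le_one).symm]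
  apply IntegrableOn.union
  · have hdom : IntegrableOn (fun x : ℝ => C₁^2 * x ^ (-(1/2):ℝ)) (Ioc 0 1) volume := by
      have h := intervalIntegral.intervalIntegrable_rpow' (a := 0) (b := 1)
        (r := (-(1/2):ℝ)) (by norm_num)
      rw [intervalIntegrable_iff_integrableOn_Ioc_of_le zero_le_one] at h
      exact h.const_mul _
    apply Integrable.mono' hdom hsm.restrict
    filter_upwards [ae_restrict_mem measurableSet_Ioc] with x hx
    have hx0 : (0:ℝ) < x := hx.1
    have hb := Kmu_le_bound1 μ hμ x hx0.ne'
    rw [abs_of_pos hx0] at hb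
    rw [Real.norm_eq_abs, abs_of_nonneg (sq_nonneg _)]
    calc Kmu μ x ^ 2 ≤ (Real.sqrt (2/π) * ((∫ τ in Ioi (0:ℝ), τ ^ ((3:ℝ)/4) / (μ^2+τ^2)) * x ^ (-(1/4):ℝ)))^2 :=
          pow_le_pow_left₀ (Kmu_nonneg μ x) hb 2
      _ = C₁^2 * x ^ (-(1/2):ℝ) := by
          have : (x ^ (-(1/4):ℝ))^2 = x ^ (-(1/2):ℝ) := by
            rw [← Real.rpow_natCast (x ^ (-(1/4):ℝ)) 2, ← Real.rpow_mul hx0.le]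
            norm_num
          rw [hC₁, mul_pow, mul_pow, this]
          ring
  · have hdom : IntegrableOn (fun x : ℝ => C₂^2 * x ^ (-(2:ℝ))) (Ioi 1) volume :=
      (integrableOn_Ioi_rpow_of_lt (by norm_num) zero_lt_one).const_mul _
    apply Integrable.mono' hdom hsm.restrict
    filter_upwards [ae_restrict_mem measurableSet_Ioi] with x hx
    have hx1 : (1:ℝ) < x := hx
    have hx0 : (0:ℝ) < x := by linarith
    have hb := Kmu_le_bound2 μ hμ x hx0.ne'
    rw [abs_of_pos hx0] at hb
    rw [Real.norm_eq_abs, abs_of_nonneg (sq_nonneg _)]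
    calc Kmu μ x ^ 2 ≤ (Real.sqrt (2/π) * ((π/(2*μ)) * x⁻¹))^2 :=
          pow_le_pow_left₀ (Kmu_nonneg μ x) hb 2
      _ = C₂^2 * x ^ (-(2:ℝ)) := by
          have : (x⁻¹)^2 = x ^ (-(2:ℝ)) := by
            rw [Real.rpow_neg hx0.le, show ((2:ℝ)) = ((2:ℕ):ℝ) by norm_num,
              Real.rpow_natCast, inv_pow]
          rw [hC₂, mul_pow, mul_pow, this]
          ring

lemma myintegral_ofReal {α : Type*} [MeasurableSpace α] {m : Measure α} (f : α → ℝ) :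
    ∫ x, ((f x : ℝ) : ℂ) ∂m = ((∫ x, f x ∂m : ℝ) : ℂ) := integral_ofReal

lemma Kmu_fourier (μ : ℝ) (hμ : 0 < μ) (ξ : ℝ) :
    fourierTr (fun x => (Kmu μ x : ℂ)) ξ = ((1 : ℂ) / ((|ξ| + μ : ℝ) : ℂ)) := by
  unfold fourierTr
  set e : ℝ → ℂ := fun x => Complex.exp (-(ξ * x) * Complex.I) with he
  set F : ℝ → ℝ → ℝ := fun x τ => τ * Real.exp (-|x| * τ) / (μ ^ 2 + τ ^ 2) with hF
  have step1 : ∀ x : ℝ, (Kmu μ x : ℂ) * e x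
      = (Real.sqrt (2/π) : ℂ) * ∫ τ in Ioi (0:ℝ), (F x τ) • e x := by
    intro x
    rw [show Kmu μ x = Real.sqrt (2/π) * ∫ τ in Ioi (0:ℝ), F x τ from rfl]
    rw [Complex.ofReal_mul, mul_assoc]
    congr 1
    rw [← Complex.real_smul, ← integral_smul_const]
  have hΦ : Integrable (Function.uncurry fun x τ => (F x τ) • e x)
      (volume.prod (volume.restrict (Ioi 0))) := by
    apply Integrable.mono' (H_prod_integrable μ hμ).norm
    · apply AEStronglyMeasurable.smul (H_prod_integrable μ hμ).aestronglyMeasurable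
      apply Continuous.aestronglyMeasurable
      exact Complex.continuous_exp.comp (by continuity)
    · filter_upwards with p
      rw [Function.uncurry]
      rw [norm_smul]
      have h2 : ‖e p.1‖ = 1 := by
        rw [he, Complex.norm_exp]
        simp
      rw [h2, mul_one]
  have swap := integral_integral_swap hΦ
  have inner_eval : ∀ᵐ τ ∂(volume.restrict (Ioi (0:ℝ))),
      (∫ x : ℝ, (F x τ) • e x) = ((τ/(μ^2+τ^2) * (2*τ/(τ^2+ξ^2)) : ℝ) : ℂ) := by
    filter_upwards [ae_restrict_mem measurableSet_Ioi] with τ hτ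
    have hτ' : (0:ℝ) < τ := hτ
    have e1 : ∀ x : ℝ, (F x τ) • e x
        = ((τ/(μ^2+τ^2) : ℝ) : ℂ) * ((Real.exp (-(τ * |x|)) : ℂ) * e x) := by
      intro x
      have hr : F x τ = (τ/(μ^2+τ^2)) * Real.exp (-(τ * |x|)) := by
        show τ * Real.exp (-|x| * τ) / (μ ^ 2 + τ ^ 2) = _
        rw [show -|x| * τ = -(τ * |x|) by ring]
        ring
      rw [Complex.real_smul, hr]
      push_cast
      ring
    simp_rw [e1]
    rw [integral_const_mul, fourier_exp_abs τ ξ hτ']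
    push_cast
    ring
  have main : (∫ x : ℝ, (Kmu μ x : ℂ) * e x)
      = (Real.sqrt (2/π) : ℂ) * ((π/(μ+|ξ|) : ℝ) : ℂ) := by
    calc ∫ x : ℝ, (Kmu μ x : ℂ) * e x
        = ∫ x : ℝ, (Real.sqrt (2/π) : ℂ) * ∫ τ in Ioi (0:ℝ), (F x τ) • e x := by
          exact integral_congr_ae (Filter.Eventually.of_forall step1)
      _ = (Real.sqrt (2/π) : ℂ) * ∫ x : ℝ, ∫ τ in Ioi (0:ℝ), (F x τ) • e x := by
          rw [integral_const_mul]
      _ = (Real.sqrt (2/π) : ℂ) * ∫ τ in Ioi (0:ℝ), ∫ x : ℝ, (F x τ) • e x := by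
          rw [swap]
      _ = (Real.sqrt (2/π) : ℂ) *
            ∫ τ in Ioi (0:ℝ), ((τ/(μ^2+τ^2) * (2*τ/(τ^2+ξ^2)) : ℝ) : ℂ) := by
          rw [integral_congr_ae inner_eval]
      _ = (Real.sqrt (2/π) : ℂ) *
            ((∫ τ in Ioi (0:ℝ), τ/(μ^2+τ^2) * (2*τ/(τ^2+ξ^2)) : ℝ) : ℂ) := by
          rw [myintegral_ofReal]
      _ = (Real.sqrt (2/π) : ℂ) * ((π/(μ+|ξ|) : ℝ) : ℂ) := by
          congr 1
          norm_cast
          have hcongr : ∀ τ ∈ Ioi (0:ℝ), τ/(μ^2+τ^2) * (2*τ/(τ^2+ξ^2))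
              = 2 * (τ^2/((μ^2+τ^2)*(|ξ|^2+τ^2))) := by
            intro τ hτ
            have hτ' : (0:ℝ) < τ := hτ
            have h1 : μ^2+τ^2 ≠ 0 := ne_of_gt (by positivity)
            have h2 : τ^2+ξ^2 ≠ 0 := ne_of_gt (by nlinarith [sq_nonneg ξ, mul_pos hτ' hτ'])
            rw [sq_abs]
            field_simp
            ring
          rw [setIntegral_congr_fun measurableSet_Ioi hcongr,
            integral_const_mul, (Jlemma μ |ξ| hμ (abs_nonneg ξ)).2]
          have h0 : 0 < μ + |ξ| := by positivity
          field_simp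
  rw [main]
  have hkey : Real.sqrt (2/π) * π = Real.sqrt (2*π) := by
    have h1 : (2:ℝ)*π = (2/π) * π^2 := by
      field_simp
    rw [h1, Real.sqrt_mul (by positivity) (π^2), Real.sqrt_sq pi_pos.le]
  have h2π : (0:ℝ) < Real.sqrt (2*π) := Real.sqrt_pos.mpr (by positivity)
  have h0 : (0:ℝ) < μ + |ξ| := by positivity
  have : ((Real.sqrt (2*π) : ℝ) : ℂ)⁻¹ * ((Real.sqrt (2/π) : ℝ) : ℂ) * ((π/(μ+|ξ|) : ℝ) : ℂ)
      = ((1:ℝ)/(|ξ|+μ) : ℝ) := by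
    rw [← Complex.ofReal_inv, ← Complex.ofReal_mul, ← Complex.ofReal_mul]
    congr 1
    have hs : Real.sqrt (2/π) = Real.sqrt (2*π)/π := by
      rw [eq_div_iff pi_pos.ne']
      exact hkey
    rw [hs, add_comm |ξ| μ]
    field_simp
  rw [← mul_assoc, this]
  push_cast
  ring

/-- For `μ > 0`, `K_μ ∈ L¹(ℝ) ∩ L²(ℝ)` and its Fourier transform satisfies
`K̂_μ(ξ) = 1/(|ξ|+μ)` for all `ξ ∈ ℝ`. -/
theorem Kmu_mem_L1_L2_and_fourier (μ : ℝ) (hμ : 0 < μ) :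
    Integrable (Kmu μ) volume ∧ MemLp (Kmu μ) 2 volume ∧
      ∀ ξ : ℝ, fourierTr (fun x => (Kmu μ x : ℂ)) ξ = ((1 : ℂ) / ((|ξ| + μ : ℝ) : ℂ)) := by
  exact ⟨Kmu_integrable μ hμ, Kmu_memL2 μ hμ (Kmu_integrable μ hμ), fun ξ => Kmu_fourier μ hμ ξ⟩
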